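/- Let A be a finite group, B ≤ A, and S a set of subgroups between B and A containing A and B and closed under pairwise products IJ (which are assumed to be subgroups lying in S) and intersections. Then any two maximal decreasing chains in S from A to B have the same length. -/

import Mathlib

open scoped Pointwise

/-- If the product of two subgroups in `S` is a subgroup in `S`, then their sup lies in `S`
and equals the product as a set. -/
lemma aux_sup_mem {A : Type*} [Group A] (S : Set (Subgroup A))
    (hprod : ∀ I ∈ S, ∀ J ∈ S, ∃ K ∈ S, (K : Set A) = (I : Set A) * (J : Set A))
    {I J : Subgroup A} (hI : I ∈ S) (hJ : J ∈ S) :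
    I ⊔ J ∈ S ∧ ((I ⊔ J : Subgroup A) : Set A) = (I : Set A) * (J : Set A) := by
  obtain ⟨K, hK, hKset⟩ := hprod I hI J hJ
  have hIK : I ≤ K := by
    intro a ha
    have : a ∈ (I : Set A) * (J : Set A) := ⟨a, ha, 1, J.one_mem, mul_one a⟩
    rwa [← hKset] at this
  have hJK : J ≤ K := by
    intro a ha
    have : a ∈ (I : Set A) * (J : Set A) := ⟨1, I.one_mem, a, ha, one_mul a⟩
    rwa [← hKset] at this
  have hKle : K ≤ I ⊔ J := by
    intro a ha
    have : a ∈ (I : Set A) * (J : Set A) := by rwa [← hKset]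
    obtain ⟨u, hu, v, hv, rfl⟩ := this
    exact mul_mem (le_sup_left (α := Subgroup A) hu) (le_sup_right (α := Subgroup A) hv)
  have hKeq : K = I ⊔ J := le_antisymm hKle (sup_le hIK hJK)
  subst hKeq
  exact ⟨hK, hKset⟩

/-- Any two maximal chains in a product- and intersection-closed family `S` of
subgroups between `B` and `A` have the same length. -/
theorem stmt_6 {A : Type*} [Group A] [Finite A] (B : Subgroup A)
    (S : Set (Subgroup A)) (hBS : B ∈ S) (htopS : ⊤ ∈ S)
    (hBle : ∀ U ∈ S, B ≤ U)
    (hprod : ∀ I ∈ S, ∀ J ∈ S, ∃ K ∈ S, (K : Set A) = (I : Set A) * (J : Set A))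
    (hinf : ∀ I ∈ S, ∀ J ∈ S, I ⊓ J ∈ S)
    (n m : ℕ) (V : Fin (n + 1) → Subgroup A) (W : Fin (m + 1) → Subgroup A)
    (hV : StrictMono V) (hW : StrictMono W)
    (hV0 : V 0 = B) (hVn : V (Fin.last n) = ⊤)
    (hW0 : W 0 = B) (hWm : W (Fin.last m) = ⊤)
    (hVS : ∀ i, V i ∈ S) (hWS : ∀ i, W i ∈ S)
    (hVmax : ∀ i : Fin n, ∀ X ∈ S, ¬(V i.castSucc < X ∧ X < V i.succ))
    (hWmax : ∀ i : Fin m, ∀ X ∈ S, ¬(W i.castSucc < X ∧ X < W i.succ)) :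
    n = m := by
  classical
  have hsupS : ∀ ⦃I J : Subgroup A⦄, I ∈ S → J ∈ S → I ⊔ J ∈ S :=
    fun I J hI hJ => (aux_sup_mem S hprod hI hJ).1
  have hsupset : ∀ {I J : Subgroup A}, I ∈ S → J ∈ S →
      ((I ⊔ J : Subgroup A) : Set A) = (I : Set A) * (J : Set A) :=
    fun hI hJ => (aux_sup_mem S hprod hI hJ).2
  have hinfS : ∀ ⦃I J : Subgroup A⦄, I ∈ S → J ∈ S → I ⊓ J ∈ S :=
    fun I J hI hJ => hinf I hI J hJ
  letI : Lattice ↥S := Subtype.lattice hsupS hinfS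
  have coe_sup : ∀ (x y : ↥S), ((x ⊔ y : ↥S) : Subgroup A) = x.1 ⊔ y.1 := fun _ _ => rfl
  have coe_inf : ∀ (x y : ↥S), ((x ⊓ y : ↥S) : Subgroup A) = x.1 ⊓ y.1 := fun _ _ => rfl
  haveI : IsModularLattice ↥S := by
    constructor
    intro x y z hxz
    change ((x.1 ⊔ y.1) ⊓ z.1 : Subgroup A) ≤ x.1 ⊔ (y.1 ⊓ z.1)
    intro a ha
    obtain ⟨ha1, ha2⟩ := Subgroup.mem_inf.mp ha
    have : a ∈ ((x.1 ⊔ y.1 : Subgroup A) : Set A) := ha1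
    rw [hsupset x.2 y.2] at this
    obtain ⟨u, hu, v, hv, rfl⟩ := this
    have hxz' : x.1 ≤ z.1 := hxz
    have huz : u ∈ z.1 := hxz' hu
    have hvz : v ∈ z.1 := by
      have : u⁻¹ * (u * v) ∈ z.1 := mul_mem (inv_mem huz) ha2
      simpa [mul_assoc] using this
    exact mul_mem (le_sup_left (α := Subgroup A) hu)
      (le_sup_right (α := Subgroup A) (Subgroup.mem_inf.mpr ⟨hv, hvz⟩))
  letI : JordanHolderLattice ↥S :=
    { IsMaximal := (· ⋖ ·)
      lt_of_isMaximal := CovBy.lt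
      sup_eq_of_isMaximal := by
        intro x y z hxz hyz hxy
        by_contra hne
        have h1 : x ⊔ y ≤ z := sup_le hxz.lt.le hyz.lt.le
        have h2 : x ⊔ y < z := lt_of_le_of_ne h1 hne
        rcases eq_or_lt_of_le (le_sup_left : x ≤ x ⊔ y) with heq | hlt
        · have hyx : y ≤ x := by
            have := (le_sup_right : y ≤ x ⊔ y); rwa [← heq] at this
          have hylt : y < x := lt_of_le_of_ne hyx fun h => hxy h.symm
          exact hyz.2 hylt hxz.lt
        · exact hxz.2 hlt h2
      isMaximal_inf_left_of_isMaximal_sup := fun hx hy =>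
        inf_covBy_of_covBy_sup_of_covBy_sup_left hx hy }
  let s₁ : CompositionSeries ↥S :=
    { length := n
      toFun := fun i => ⟨V i, hVS i⟩
      step := by
        intro i
        constructor
        · exact Subtype.mk_lt_mk.mpr (hV (Fin.castSucc_lt_succ (i := i)))
        · intro c hc hc'
          exact hVmax i c.1 c.2 ⟨Subtype.mk_lt_mk.mp hc, Subtype.mk_lt_mk.mp hc'⟩ }
  let s₂ : CompositionSeries ↥S :=
    { length := m
      toFun := fun i => ⟨W i, hWS i⟩
      step := by
        intro i
        constructor
        · exact Subtype.mk_lt_mk.mpr (hW (Fin.castSucc_lt_succ (i := i)))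
        · intro c hc hc'
          exact hWmax i c.1 c.2 ⟨Subtype.mk_lt_mk.mp hc, Subtype.mk_lt_mk.mp hc'⟩ }
  have hb : s₁.head = s₂.head := by
    apply Subtype.ext
    show V 0 = W 0
    rw [hV0, hW0]
  have ht : s₁.last = s₂.last := by
    apply Subtype.ext
    show V (Fin.last n) = W (Fin.last m)
    rw [hVn, hWm]
  obtain ⟨f, -⟩ := CompositionSeries.jordan_holder s₁ s₂ hb ht
  exact Fin.equiv_iff_eq.mp ⟨f⟩
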